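/- Under the pro-rata dynamic model, the optimization problem max ∑_{t=0}^{T−1} a_t 𝟙ᵀp(t) over all admissible payment-vector sequences [p] = (p(0),…,p(T−1)), where a_t = ∑_{j=0}^{T−t−1} α^j, has a unique maximizer [p*]. -/

import Mathlib

open Matrix Finset

/-- A sequence `p(0), …, p(T-1)` of payment vectors is admissible in the pro-rata
dynamic model: for every `t < T`, `p(t) ≥ 0`,
`∑_{k=0}^t α^{t-k} p(k) ≤ α^t p̄`, and `C(t) + ∑_{k=0}^t (Aᵀp(k) - p(k)) ≥ 0`. -/
def AdmissibleVecSeq (n T : ℕ) (α : ℝ) (A : Matrix (Fin n) (Fin n) ℝ)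
    (pbar : Fin n → ℝ) (c : ℕ → Fin n → ℝ) (p : ℕ → Fin n → ℝ) : Prop :=
  ∀ t < T,
    (∀ i, 0 ≤ p t i) ∧
    (∀ i, ∑ k ∈ Finset.range (t + 1), α ^ (t - k) * p k i ≤ α ^ t * pbar i) ∧
    (∀ i, 0 ≤ (∑ k ∈ Finset.range (t + 1), c k i) +
      ∑ k ∈ Finset.range (t + 1), (Aᵀ.mulVec (p k) i - p k i))

/-- The coefficient `a_t = ∑_{j=0}^{T-t-1} α^j`. -/
def coeff (T : ℕ) (α : ℝ) (t : ℕ) : ℝ := ∑ j ∈ Finset.range (T - t), α ^ j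

/-- The objective `∑_{t=0}^{T-1} a_t 𝟙ᵀ p(t)`. -/
def objVecSeq (n T : ℕ) (a : ℕ → ℝ) (p : ℕ → Fin n → ℝ) : ℝ :=
  ∑ t ∈ Finset.range T, a t * ∑ i, p t i

/-- The residual nominal liabilities `p̄*(t) = α^t p̄ - ∑_{k<t} α^{t-k} p(k)`. -/
def nominalVec {n : ℕ} (α : ℝ) (pbar : Fin n → ℝ) (p : ℕ → Fin n → ℝ) (t : ℕ) :
    Fin n → ℝ :=
  fun i => α ^ t * pbar i - ∑ k ∈ Finset.range t, α ^ (t - k) * p k i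

/-- The net worths `w*(t) = C(t-1) + ∑_{k<t} (Aᵀp(k) - p(k))`. -/
def worthVec {n : ℕ} (A : Matrix (Fin n) (Fin n) ℝ) (c : ℕ → Fin n → ℝ)
    (p : ℕ → Fin n → ℝ) (t : ℕ) : Fin n → ℝ :=
  fun i => (∑ k ∈ Finset.range t, c k i) +
    ∑ k ∈ Finset.range t, (Aᵀ.mulVec (p k) i - p k i)

namespace ProrataAux

variable {n : ℕ}

/-- Receipts `(Aᵀ z)_i` written as an explicit sum. -/
def rcv (A : Matrix (Fin n) (Fin n) ℝ) (z : Fin n → ℝ) (i : Fin n) : ℝ :=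
  ∑ j, A j i * z j

lemma rcv_eq (A : Matrix (Fin n) (Fin n) ℝ) (z : Fin n → ℝ) (i : Fin n) :
    Aᵀ.mulVec z i = rcv A z i := by
  simp [rcv, Matrix.mulVec, dotProduct, Matrix.transpose_apply]

lemma rcv_mono (A : Matrix (Fin n) (Fin n) ℝ) (hA0 : ∀ i j, 0 ≤ A i j)
    {z w : Fin n → ℝ} (h : ∀ j, z j ≤ w j) (i : Fin n) :
    rcv A z i ≤ rcv A w i :=
  Finset.sum_le_sum fun j _ => mul_le_mul_of_nonneg_left (h j) (hA0 j i)

lemma rcv_nonneg (A : Matrix (Fin n) (Fin n) ℝ) (hA0 : ∀ i j, 0 ≤ A i j)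
    {z : Fin n → ℝ} (hz : ∀ j, 0 ≤ z j) (i : Fin n) : 0 ≤ rcv A z i :=
  Finset.sum_nonneg fun j _ => mul_nonneg (hA0 j i) (hz j)

lemma rcv_smul (A : Matrix (Fin n) (Fin n) ℝ) (a : ℝ) (z : Fin n → ℝ) (i : Fin n) :
    rcv A (fun j => a * z j) i = a * rcv A z i := by
  simp only [rcv, Finset.mul_sum]
  exact Finset.sum_congr rfl fun j _ => by ring

lemma rcv_sub (A : Matrix (Fin n) (Fin n) ℝ) (z w : Fin n → ℝ) (i : Fin n) :
    rcv A (fun j => z j - w j) i = rcv A z i - rcv A w i := by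
  simp [rcv, mul_sub, Finset.sum_sub_distrib]

lemma rcv_fsum (A : Matrix (Fin n) (Fin n) ℝ) (s : Finset ℕ) (f : ℕ → Fin n → ℝ)
    (i : Fin n) :
    rcv A (fun j => ∑ k ∈ s, f k j) i = ∑ k ∈ s, rcv A (f k) i := by
  simp only [rcv, Finset.mul_sum]
  exact Finset.sum_comm

/-- The discounted cumulative external cash. -/
def Chat (α : ℝ) (c : ℕ → Fin n → ℝ) (t : ℕ) (i : Fin n) : ℝ :=
  ∑ k ∈ Finset.range (t + 1), α ^ (t - k) * c k i

/-- The Eisenberg–Noe-type polytope in which every admissible `y(t)` lies. -/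
def Pset (α : ℝ) (A : Matrix (Fin n) (Fin n) ℝ) (pbar : Fin n → ℝ)
    (c : ℕ → Fin n → ℝ) (t : ℕ) : Set (Fin n → ℝ) :=
  {z | (∀ i, 0 ≤ z i) ∧ (∀ i, z i ≤ α ^ t * pbar i) ∧
    ∀ i, z i ≤ Chat α c t i + rcv A z i}

/-- one-step recurrence for discounted sums -/
lemma disc_succ (α : ℝ) (g : ℕ → ℝ) (t : ℕ) :
    ∑ k ∈ Finset.range (t + 2), α ^ (t + 1 - k) * g k
      = α * ∑ k ∈ Finset.range (t + 1), α ^ (t - k) * g k + g (t + 1) := by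
  rw [Finset.sum_range_succ]
  congr 1
  · rw [Finset.mul_sum]
    refine Finset.sum_congr rfl fun k hk => ?_
    have hk' : k ≤ t := Nat.lt_succ_iff.mp (Finset.mem_range.mp hk)
    have he : t + 1 - k = (t - k) + 1 := by omega
    rw [he, pow_succ]
    ring
  · simp

/-- Abel-type identity: discounted sum in terms of partial sums. -/
lemma abel_sum (α : ℝ) (g : ℕ → ℝ) (t : ℕ) :
    ∑ k ∈ Finset.range (t + 1), α ^ (t - k) * g k
      = (∑ k ∈ Finset.range (t + 1), g k)
        + (α - 1) * ∑ s ∈ Finset.range t,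
            α ^ (t - 1 - s) * ∑ k ∈ Finset.range (s + 1), g k := by
  induction t with
  | zero => simp
  | succ t ih =>
      rw [disc_succ, ih, Finset.sum_range_succ
        (f := fun s => α ^ (t + 1 - 1 - s) * ∑ k ∈ Finset.range (s + 1), g k),
        Finset.sum_range_succ (f := fun k => g k)]
      have h1 : ∀ s ∈ Finset.range t,
          α ^ (t + 1 - 1 - s) * (∑ k ∈ Finset.range (s + 1), g k)
          = α * (α ^ (t - 1 - s) * ∑ k ∈ Finset.range (s + 1), g k) := by
        intro s hs
        have hs' : s < t := Finset.mem_range.mp hs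
        have he : t + 1 - 1 - s = (t - 1 - s) + 1 := by omega
        rw [he, pow_succ]
        ring
      rw [Finset.sum_congr rfl h1, ← Finset.mul_sum]
      have he2 : t + 1 - 1 - t = 0 := by omega
      rw [he2, pow_zero, Finset.sum_range_succ (f := g) (n := t + 1),
        Finset.sum_range_succ (f := g) (n := t)]
      ring

end ProrataAux

open ProrataAux

namespace ProrataAux

variable {n : ℕ}

lemma Pset_join (α : ℝ) (A : Matrix (Fin n) (Fin n) ℝ) (pbar : Fin n → ℝ)
    (c : ℕ → Fin n → ℝ) (t : ℕ) (hA0 : ∀ i j, 0 ≤ A i j)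
    {z w : Fin n → ℝ} (hz : z ∈ Pset α A pbar c t) (hw : w ∈ Pset α A pbar c t) :
    (fun i => max (z i) (w i)) ∈ Pset α A pbar c t := by
  obtain ⟨hz0, hzc, hze⟩ := hz
  obtain ⟨hw0, hwc, hwe⟩ := hw
  refine ⟨fun i => le_max_of_le_left (hz0 i), fun i => max_le (hzc i) (hwc i), fun i => ?_⟩
  have hm1 := rcv_mono A hA0 (fun j => le_max_left (z j) (w j)) i
  have hm2 := rcv_mono A hA0 (fun j => le_max_right (z j) (w j)) i
  show max (z i) (w i) ≤ Chat α c t i + rcv A (fun j => max (z j) (w j)) i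
  rcases max_cases (z i) (w i) with ⟨h, _⟩ | ⟨h, _⟩ <;> rw [h]
  · have := hze i; linarith
  · have := hwe i; linarith

lemma Pset_zero (α : ℝ) (A : Matrix (Fin n) (Fin n) ℝ) (pbar : Fin n → ℝ)
    (c : ℕ → Fin n → ℝ) (t : ℕ)
    (hcap : ∀ i, 0 ≤ α ^ t * pbar i) (hCh : ∀ i, 0 ≤ Chat α c t i) :
    (0 : Fin n → ℝ) ∈ Pset α A pbar c t := by
  refine ⟨fun i => le_rfl, fun i => hcap i, fun i => ?_⟩
  simpa [rcv] using hCh i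

lemma Pset_isClosed (α : ℝ) (A : Matrix (Fin n) (Fin n) ℝ) (pbar : Fin n → ℝ)
    (c : ℕ → Fin n → ℝ) (t : ℕ) : IsClosed (Pset α A pbar c t) := by
  have h1 : Pset α A pbar c t =
      (⋂ i : Fin n, {z : Fin n → ℝ | 0 ≤ z i}) ∩
      ((⋂ i : Fin n, {z : Fin n → ℝ | z i ≤ α ^ t * pbar i}) ∩
       (⋂ i : Fin n, {z : Fin n → ℝ | z i - rcv A z i ≤ Chat α c t i})) := by
    ext z
    simp only [Pset, Set.mem_setOf_eq, Set.mem_inter_iff, Set.mem_iInter, sub_le_iff_le_add]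
  rw [h1]
  have hrcv : ∀ i : Fin n, Continuous fun z : Fin n → ℝ => rcv A z i := by
    intro i
    exact continuous_finset_sum _ fun j _ => continuous_const.mul (continuous_apply j)
  refine IsClosed.inter (isClosed_iInter fun i => isClosed_le continuous_const (continuous_apply i))
    (IsClosed.inter (isClosed_iInter fun i => isClosed_le (continuous_apply i) continuous_const)
      (isClosed_iInter fun i => isClosed_le ((continuous_apply i).sub (hrcv i)) continuous_const))

lemma exists_greatest (α : ℝ) (A : Matrix (Fin n) (Fin n) ℝ) (pbar : Fin n → ℝ)
    (c : ℕ → Fin n → ℝ) (t : ℕ) (hA0 : ∀ i j, 0 ≤ A i j)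
    (hcap : ∀ i, 0 ≤ α ^ t * pbar i) (hCh : ∀ i, 0 ≤ Chat α c t i) :
    ∃ w ∈ Pset α A pbar c t, ∀ z ∈ Pset α A pbar c t, ∀ i, z i ≤ w i := by
  classical
  set S := Pset α A pbar c t with hSdef
  have h0S : (0 : Fin n → ℝ) ∈ S := Pset_zero α A pbar c t hcap hCh
  have hsub : S ⊆ Set.Icc (0 : Fin n → ℝ) (fun i => α ^ t * pbar i) := by
    intro z hz
    exact ⟨fun i => hz.1 i, fun i => hz.2.1 i⟩
  have hcpt : IsCompact S :=
    (isCompact_Icc).of_isClosed_subset (Pset_isClosed α A pbar c t) hsub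
  have hmax : ∀ i : Fin n, ∃ w ∈ S, ∀ z ∈ S, z i ≤ w i := by
    intro i
    obtain ⟨w, hwS, hw⟩ := hcpt.exists_isMaxOn ⟨0, h0S⟩ ((continuous_apply i).continuousOn)
    exact ⟨w, hwS, fun z hz => hw hz⟩
  have hind : ∀ s : Finset (Fin n), ∃ w ∈ S, ∀ i ∈ s, ∀ z ∈ S, z i ≤ w i := by
    intro s
    induction s using Finset.induction_on with
    | empty => exact ⟨0, h0S, by simp⟩
    | insert a s hnot ih =>
        obtain ⟨w, hwS, hw⟩ := ih
        obtain ⟨v, hvS, hv⟩ := hmax a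
        refine ⟨fun i => max (v i) (w i), Pset_join α A pbar c t hA0 hvS hwS, ?_⟩
        intro j hj z hz
        rcases Finset.mem_insert.mp hj with h | h
        · exact h ▸ (hv z hz).trans (le_max_left _ _)
        · exact (hw j h z hz).trans (le_max_right _ _)
  obtain ⟨w, hwS, hw⟩ := hind Finset.univ
  exact ⟨w, hwS, fun z hz i => hw i (Finset.mem_univ i) z hz⟩

lemma greatest_dichotomy (α : ℝ) (A : Matrix (Fin n) (Fin n) ℝ) (pbar : Fin n → ℝ)
    (c : ℕ → Fin n → ℝ) (t : ℕ) (hA0 : ∀ i j, 0 ≤ A i j)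
    {w : Fin n → ℝ} (hwS : w ∈ Pset α A pbar c t)
    (hgr : ∀ z ∈ Pset α A pbar c t, ∀ i, z i ≤ w i) (i : Fin n) :
    w i = α ^ t * pbar i ∨ Chat α c t i + rcv A w i ≤ w i := by
  by_contra hcon
  push_neg at hcon
  obtain ⟨h1, h2⟩ := hcon
  have hlt1 : w i < α ^ t * pbar i := lt_of_le_of_ne (hwS.2.1 i) h1
  set ε := min (α ^ t * pbar i - w i) (Chat α c t i + rcv A w i - w i) with hε
  have hεpos : 0 < ε := lt_min (by linarith) (by linarith)
  set z' := Function.update w i (w i + ε) with hz'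
  have hge : ∀ j, w j ≤ z' j := by
    intro j
    by_cases hj : j = i
    · subst hj; simp [hz', Function.update_self]; linarith
    · simp [hz', Function.update_of_ne hj]
  have hz'S : z' ∈ Pset α A pbar c t := by
    refine ⟨fun j => (hwS.1 j).trans (hge j), fun j => ?_, fun j => ?_⟩
    · by_cases hj : j = i
      · subst hj
        simp only [hz', Function.update_self]
        have hm1 : ε ≤ α ^ t * pbar j - w j := by rw [hε]; exact min_le_left _ _
        linarith
      · simp only [hz', Function.update_of_ne hj]
        exact hwS.2.1 j
    · have hr : rcv A w j ≤ rcv A z' j := rcv_mono A hA0 hge j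
      by_cases hj : j = i
      · subst hj
        simp only [hz', Function.update_self]
        have hm2 : ε ≤ Chat α c t j + rcv A w j - w j := by rw [hε]; exact min_le_right _ _
        linarith
      · simp only [hz', Function.update_of_ne hj]
        have := hwS.2.2 j
        linarith
  have := hgr z' hz'S i
  simp only [hz', Function.update_self] at this
  linarith

end ProrataAux


/-- In the pro-rata dynamic model, the maximization of `∑_{t<T} a_t 𝟙ᵀp(t)` over all
admissible payment-vector sequences has a maximizer which is unique (any two maximizers
agree at every period `t < T`). -/
theorem prorata_dynamic_unique_maximizer (n T : ℕ) (hn : 1 ≤ n) (hT : 1 ≤ T)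
    (α : ℝ) (hα : 1 ≤ α)
    (A : Matrix (Fin n) (Fin n) ℝ) (hA0 : ∀ i j, 0 ≤ A i j) (hA1 : ∀ i, ∑ j, A i j = 1)
    (pbar : Fin n → ℝ) (hpbar : ∀ i, 0 ≤ pbar i)
    (c : ℕ → Fin n → ℝ) (hc : ∀ t < T, ∀ i, 0 ≤ c t i) :
    ∃ pstar : ℕ → Fin n → ℝ,
      AdmissibleVecSeq n T α A pbar c pstar ∧
      (∀ q, AdmissibleVecSeq n T α A pbar c q →
        objVecSeq n T (coeff T α) q ≤ objVecSeq n T (coeff T α) pstar) ∧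
      (∀ q, AdmissibleVecSeq n T α A pbar c q →
        (∀ r, AdmissibleVecSeq n T α A pbar c r →
          objVecSeq n T (coeff T α) r ≤ objVecSeq n T (coeff T α) q) →
        ∀ t < T, q t = pstar t) := by
  classical
  have hα0 : (0:ℝ) ≤ α := zero_le_one.trans hα
  have hα1 : (0:ℝ) ≤ α - 1 := by linarith
  have hcapnn : ∀ t (i : Fin n), 0 ≤ α ^ t * pbar i :=
    fun t i => mul_nonneg (pow_nonneg hα0 t) (hpbar i)
  have hChnn : ∀ t, t < T → ∀ i, 0 ≤ Chat α c t i := by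
    intro t ht i
    refine Finset.sum_nonneg fun k hk => mul_nonneg (pow_nonneg hα0 _) (hc k ?_ i)
    have := Finset.mem_range.mp hk; omega
  have hex : ∀ t, t < T →
      ∃ w ∈ Pset α A pbar c t, ∀ z ∈ Pset α A pbar c t, ∀ i, z i ≤ w i :=
    fun t ht => exists_greatest α A pbar c t hA0 (hcapnn t) (hChnn t ht)
  choose! zh hzh using hex
  have hzmem : ∀ t, t < T → zh t ∈ Pset α A pbar c t := fun t ht => (hzh t ht).1
  have hzgr : ∀ t, t < T → ∀ z ∈ Pset α A pbar c t, ∀ i, z i ≤ zh t i :=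
    fun t ht => (hzh t ht).2
  set zp : ℕ → Fin n → ℝ := fun t => match t with | 0 => 0 | (s+1) => zh s with hzp
  set ps : ℕ → Fin n → ℝ := fun t i => zh t i - α * zp t i with hps
  have hps0 : ∀ i, ps 0 i = zh 0 i := fun i => by simp [hps, hzp]
  have hpsS : ∀ s i, ps (s+1) i = zh (s+1) i - α * zh s i := fun s i => by simp [hps, hzp]
  have hChrec : ∀ t i, Chat α c (t+1) i = α * Chat α c t i + c (t+1) i :=
    fun t i => disc_succ α (fun k => c k i) t
  have h_mono : ∀ s, s + 1 < T → ∀ i, α * zh s i ≤ zh (s+1) i := by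
    intro s hs i
    have hsT : s < T := by omega
    have hmem : (fun j => α * zh s j) ∈ Pset α A pbar c (s+1) := by
      obtain ⟨h0, hcap, hen⟩ := hzmem s hsT
      refine ⟨fun j => mul_nonneg hα0 (h0 j), fun j => ?_, fun j => ?_⟩
      · show α * zh s j ≤ α ^ (s+1) * pbar j
        have h1 := hcap j
        have hpow : α * (α ^ s * pbar j) = α ^ (s+1) * pbar j := by rw [pow_succ]; ring
        nlinarith
      · show α * zh s j ≤ Chat α c (s+1) j + rcv A (fun k => α * zh s k) j
        have h1 := hen j
        have h2 : α * zh s j ≤ α * (Chat α c s j + rcv A (zh s) j) :=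
          mul_le_mul_of_nonneg_left h1 hα0
        have h3 : rcv A (fun k => α * zh s k) j = α * rcv A (zh s) j := rcv_smul A α (zh s) j
        have h4 : Chat α c (s+1) j = α * Chat α c s j + c (s+1) j := hChrec s j
        have h5 : 0 ≤ c (s+1) j := hc (s+1) hs j
        rw [h3, h4]; linarith
    exact hzgr (s+1) hs _ hmem i
  have hps_nonneg : ∀ t, t < T → ∀ i, 0 ≤ ps t i := by
    intro t ht i
    cases t with
    | zero => rw [hps0 i]; exact (hzmem 0 ht).1 i
    | succ s =>
        rw [hpsS s i]
        have := h_mono s ht i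
        linarith
  have hY : ∀ t, t < T → ∀ i,
      (∑ k ∈ Finset.range (t+1), α ^ (t-k) * ps k i) = zh t i := by
    intro t
    induction t with
    | zero =>
        intro ht i
        simp only [zero_add, Finset.sum_range_one, Nat.sub_zero, pow_zero, one_mul]
        exact hps0 i
    | succ s ih =>
        intro ht i
        have hsT : s < T := by omega
        rw [disc_succ α (fun k => ps k i) s, ih hsT i, hpsS s i]
        ring
  have hstep : ∀ s, s + 1 < T → ∀ i,
      (zh (s+1) i - rcv A (zh (s+1)) i) - α * (zh s i - rcv A (zh s) i) ≤ c (s+1) i := by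
    intro s hs i
    have hsT : s < T := by omega
    have h5 : 0 ≤ c (s+1) i := hc _ hs i
    rcases greatest_dichotomy α A pbar c s hA0 (hzmem s hsT) (hzgr s hsT) i with hcap | hen
    · have h1 : zh (s+1) i ≤ α ^ (s+1) * pbar i := (hzmem (s+1) hs).2.1 i
      have h2 : α * zh s i = α ^ (s+1) * pbar i := by rw [hcap, pow_succ]; ring
      have h3 : α * rcv A (zh s) i ≤ rcv A (zh (s+1)) i := by
        rw [← rcv_smul A α (zh s) i]
        exact rcv_mono A hA0 (fun j => h_mono s hs j) i
      linarith
    · have h1 : zh (s+1) i ≤ Chat α c (s+1) i + rcv A (zh (s+1)) i := (hzmem (s+1) hs).2.2 i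
      have h2 : Chat α c (s+1) i = α * Chat α c s i + c (s+1) i := hChrec s i
      have h3 : α * Chat α c s i ≤ α * (zh s i - rcv A (zh s) i) :=
        mul_le_mul_of_nonneg_left (by linarith) hα0
      linarith
  have hcum : ∀ t, t < T → ∀ i,
      (∑ k ∈ Finset.range (t+1), (ps k i - rcv A (ps k) i))
        ≤ ∑ k ∈ Finset.range (t+1), c k i := by
    intro t
    induction t with
    | zero =>
        intro ht i
        have h1 : zh 0 i ≤ Chat α c 0 i + rcv A (zh 0) i := (hzmem 0 ht).2.2 i
        have h2 : Chat α c 0 i = c 0 i := by simp [Chat]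
        have h3 : rcv A (ps 0) i = rcv A (zh 0) i := by
          unfold rcv; exact Finset.sum_congr rfl fun j _ => by rw [hps0 j]
        simp only [zero_add, Finset.sum_range_one]
        rw [hps0 i, h3]
        linarith
    | succ s ih =>
        intro ht i
        have hsT : s < T := by omega
        rw [Finset.sum_range_succ, Finset.sum_range_succ (f := fun k => c k i)]
        have h3 : rcv A (ps (s+1)) i = rcv A (zh (s+1)) i - α * rcv A (zh s) i := by
          have e1 : rcv A (ps (s+1)) i = rcv A (fun j => zh (s+1) j - α * zh s j) i := by
            unfold rcv; exact Finset.sum_congr rfl fun j _ => by rw [hpsS s j]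
          rw [e1, rcv_sub A (zh (s+1)) (fun j => α * zh s j) i, rcv_smul A α (zh s) i]
        have hps_rcv : ps (s+1) i - rcv A (ps (s+1)) i
            = (zh (s+1) i - rcv A (zh (s+1)) i) - α * (zh s i - rcv A (zh s) i) := by
          rw [hpsS s i, h3]; ring
        have hst := hstep s ht i
        have hih := ih hsT i
        linarith
  have hadm : AdmissibleVecSeq n T α A pbar c ps := by
    intro t ht
    refine ⟨fun i => hps_nonneg t ht i, fun i => ?_, fun i => ?_⟩
    · rw [hY t ht i]
      exact (hzmem t ht).2.1 i
    · have h1 := hcum t ht i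
      have h2 : (∑ k ∈ Finset.range (t+1), (Aᵀ.mulVec (ps k) i - ps k i))
          = - ∑ k ∈ Finset.range (t+1), (ps k i - rcv A (ps k) i) := by
        rw [← Finset.sum_neg_distrib]
        exact Finset.sum_congr rfl fun k _ => by rw [rcv_eq]; ring
      rw [h2]
      linarith
  -- domination
  have hyq_mem : ∀ q, AdmissibleVecSeq n T α A pbar c q → ∀ t, t < T →
      (fun i => ∑ k ∈ Finset.range (t+1), α ^ (t-k) * q k i) ∈ Pset α A pbar c t := by
    intro q hq t ht
    refine ⟨fun i => ?_, fun i => (hq t ht).2.1 i, fun i => ?_⟩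
    · refine Finset.sum_nonneg fun k hk => mul_nonneg (pow_nonneg hα0 _) ?_
      have hk' := Finset.mem_range.mp hk
      exact (hq k (by omega)).1 i
    · set g : ℕ → ℝ := fun k => q k i - rcv A (q k) i with hg
      have hlin : rcv A (fun j => ∑ k ∈ Finset.range (t+1), α ^ (t-k) * q k j) i
          = ∑ k ∈ Finset.range (t+1), α ^ (t-k) * rcv A (q k) i := by
        rw [rcv_fsum A (Finset.range (t+1)) (fun k j => α ^ (t-k) * q k j) i]
        exact Finset.sum_congr rfl fun k _ => rcv_smul A (α ^ (t-k)) (q k) i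
      have hsplit : (∑ k ∈ Finset.range (t+1), α ^ (t-k) * g k)
          = (∑ k ∈ Finset.range (t+1), α ^ (t-k) * q k i)
            - ∑ k ∈ Finset.range (t+1), α ^ (t-k) * rcv A (q k) i := by
        rw [← Finset.sum_sub_distrib]
        exact Finset.sum_congr rfl fun k _ => by rw [hg]; ring
      have hG : ∀ s, s < t + 1 →
          (∑ k ∈ Finset.range (s+1), g k) ≤ ∑ k ∈ Finset.range (s+1), c k i := by
        intro s hs
        have hsT : s < T := by omega
        have hw := (hq s hsT).2.2 i
        have h2 : (∑ k ∈ Finset.range (s+1), (Aᵀ.mulVec (q k) i - q k i))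
            = - ∑ k ∈ Finset.range (s+1), g k := by
          rw [← Finset.sum_neg_distrib]
          exact Finset.sum_congr rfl fun k _ => by rw [rcv_eq, hg]; ring
        rw [h2] at hw
        linarith
      have ha1 := abel_sum α g t
      have ha2 : Chat α c t i = (∑ k ∈ Finset.range (t+1), c k i)
          + (α - 1) * ∑ s ∈ Finset.range t,
              α ^ (t-1-s) * ∑ k ∈ Finset.range (s+1), c k i := abel_sum α (fun k => c k i) t
      have hcmp : (∑ k ∈ Finset.range (t+1), α ^ (t-k) * g k) ≤ Chat α c t i := by
        rw [ha1, ha2]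
        have hterm : (∑ s ∈ Finset.range t, α ^ (t-1-s) * ∑ k ∈ Finset.range (s+1), g k)
            ≤ ∑ s ∈ Finset.range t, α ^ (t-1-s) * ∑ k ∈ Finset.range (s+1), c k i :=
          Finset.sum_le_sum fun s hs =>
            mul_le_mul_of_nonneg_left (hG s (by have := Finset.mem_range.mp hs; omega))
              (pow_nonneg hα0 _)
        have hG2 := hG t (by omega)
        have := mul_le_mul_of_nonneg_left hterm hα1
        linarith
      show (∑ k ∈ Finset.range (t+1), α ^ (t-k) * q k i)
          ≤ Chat α c t i + rcv A (fun j => ∑ k ∈ Finset.range (t+1), α ^ (t-k) * q k j) i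
      rw [hlin]
      linarith [hsplit, hcmp]
  have hdom : ∀ q, AdmissibleVecSeq n T α A pbar c q → ∀ t, t < T → ∀ i,
      (∑ k ∈ Finset.range (t+1), α ^ (t-k) * q k i) ≤ zh t i :=
    fun q hq t ht i => hzgr t ht _ (hyq_mem q hq t ht) i
  -- objective identity
  have hobj : ∀ p : ℕ → Fin n → ℝ, objVecSeq n T (coeff T α) p
      = ∑ t ∈ Finset.range T, ∑ i, ∑ k ∈ Finset.range (t+1), α ^ (t-k) * p k i := by
    intro p
    have h1 : ∀ t, (∑ i, ∑ k ∈ Finset.range (t+1), α ^ (t-k) * p k i)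
        = ∑ k ∈ Finset.range (t+1), α ^ (t-k) * ∑ i, p k i := by
      intro t
      rw [Finset.sum_comm]
      exact Finset.sum_congr rfl fun k _ => by rw [Finset.mul_sum]
    have h2 : (∑ t ∈ Finset.range T, ∑ k ∈ Finset.range (t+1), α ^ (t-k) * ∑ i, p k i)
        = ∑ k ∈ Finset.range T, (∑ j ∈ Finset.range (T-k), α ^ j) * ∑ i, p k i := by
      calc (∑ t ∈ Finset.range T, ∑ k ∈ Finset.range (t+1), α ^ (t-k) * ∑ i, p k i)
          = ∑ t ∈ Finset.Ico 0 T, ∑ k ∈ Finset.Ico 0 (t+1), α ^ (t-k) * ∑ i, p k i := by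
            simp only [Finset.range_eq_Ico]
        _ = ∑ k ∈ Finset.Ico 0 T, ∑ t ∈ Finset.Ico k T, α ^ (t-k) * ∑ i, p k i :=
            (Finset.sum_Ico_Ico_comm 0 T (fun k t => α ^ (t-k) * ∑ i, p k i)).symm
        _ = ∑ k ∈ Finset.range T, ∑ t ∈ Finset.Ico k T, α ^ (t-k) * ∑ i, p k i := by
            rw [Finset.range_eq_Ico]
        _ = ∑ k ∈ Finset.range T, (∑ j ∈ Finset.range (T-k), α ^ j) * ∑ i, p k i := by
            refine Finset.sum_congr rfl fun k hk => ?_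
            rw [Finset.sum_Ico_eq_sum_range, Finset.sum_mul]
            refine Finset.sum_congr rfl fun j hj => ?_
            rw [show k + j - k = j by omega]
    calc objVecSeq n T (coeff T α) p
        = ∑ t ∈ Finset.range T, (∑ j ∈ Finset.range (T-t), α ^ j) * ∑ i, p t i := rfl
      _ = ∑ t ∈ Finset.range T, ∑ k ∈ Finset.range (t+1), α ^ (t-k) * ∑ i, p k i := h2.symm
      _ = ∑ t ∈ Finset.range T, ∑ i, ∑ k ∈ Finset.range (t+1), α ^ (t-k) * p k i := by
          exact Finset.sum_congr rfl fun t _ => (h1 t).symm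
  have hmaxle : ∀ q, AdmissibleVecSeq n T α A pbar c q →
      objVecSeq n T (coeff T α) q ≤ objVecSeq n T (coeff T α) ps := by
    intro q hq
    rw [hobj q, hobj ps]
    refine Finset.sum_le_sum fun t htmem => ?_
    have ht : t < T := Finset.mem_range.mp htmem
    refine Finset.sum_le_sum fun i _ => ?_
    rw [hY t ht i]
    exact hdom q hq t ht i
  refine ⟨ps, hadm, hmaxle, ?_⟩
  intro q hq hqmax
  have h1 : objVecSeq n T (coeff T α) q ≤ objVecSeq n T (coeff T α) ps := hmaxle q hq
  have h2 := hqmax ps hadm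
  have heq : objVecSeq n T (coeff T α) q = objVecSeq n T (coeff T α) ps := le_antisymm h1 h2
  have hsum0 : (∑ t ∈ Finset.range T, ∑ i,
      (zh t i - ∑ k ∈ Finset.range (t+1), α ^ (t-k) * q k i)) = 0 := by
    have hthis := heq
    rw [hobj q, hobj ps] at hthis
    have hps_eq : ∀ t ∈ Finset.range T,
        (∑ i, ∑ k ∈ Finset.range (t+1), α ^ (t-k) * ps k i) = ∑ i, zh t i :=
      fun t htm => Finset.sum_congr rfl fun i _ => hY t (Finset.mem_range.mp htm) i
    rw [Finset.sum_congr rfl hps_eq] at hthis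
    have hexp : (∑ t ∈ Finset.range T, ∑ i,
        (zh t i - ∑ k ∈ Finset.range (t+1), α ^ (t-k) * q k i))
        = (∑ t ∈ Finset.range T, ∑ i, zh t i)
          - ∑ t ∈ Finset.range T, ∑ i, ∑ k ∈ Finset.range (t+1), α ^ (t-k) * q k i := by
      rw [← Finset.sum_sub_distrib]
      exact Finset.sum_congr rfl fun t _ => by rw [← Finset.sum_sub_distrib]
    rw [hexp, hthis]
    ring
  have hy_eq : ∀ t, t < T → ∀ i,
      (∑ k ∈ Finset.range (t+1), α ^ (t-k) * q k i) = zh t i := by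
    intro t ht i
    have hnn : ∀ t' ∈ Finset.range T, 0 ≤ ∑ i,
        (zh t' i - ∑ k ∈ Finset.range (t'+1), α ^ (t'-k) * q k i) :=
      fun t' htm => Finset.sum_nonneg fun i _ =>
        sub_nonneg.mpr (hdom q hq t' (Finset.mem_range.mp htm) i)
    have ht0 := (Finset.sum_eq_zero_iff_of_nonneg hnn).mp hsum0 t (Finset.mem_range.mpr ht)
    have hnn2 : ∀ i ∈ (Finset.univ : Finset (Fin n)), 0 ≤
        zh t i - ∑ k ∈ Finset.range (t+1), α ^ (t-k) * q k i :=
      fun i _ => sub_nonneg.mpr (hdom q hq t ht i)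
    have := (Finset.sum_eq_zero_iff_of_nonneg hnn2).mp ht0 i (Finset.mem_univ i)
    linarith
  intro t ht
  funext i
  cases t with
  | zero =>
      rw [hps0 i, ← hy_eq 0 ht i]
      simp only [zero_add, Finset.sum_range_one, Nat.sub_zero, pow_zero, one_mul]
  | succ s =>
      have hsT : s < T := by omega
      have hds := disc_succ α (fun k => q k i) s
      rw [hy_eq (s+1) ht i, hy_eq s hsT i] at hds
      rw [hpsS s i]
      linarith
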